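/- For any n ≥ 1 and any multi-index (ν_1,…,ν_n) ∈ ℕ^n, the Lebesgue integral over the ordered simplex { s ∈ ℝ^n : 0 ≤ s_1 ≤ s_2 ≤ ⋯ ≤ s_n ≤ 1 } satisfies ∫_{0 ≤ s_1 ≤ ⋯ ≤ s_n ≤ 1} ∏_{k=1}^n s_k^{ν_k} ds_1⋯ds_n = 1/∏_{k=1}^n μ_k, where μ_k = ∑_{j=1}^k (ν_j + 1). -/

import Mathlib

open MeasureTheory

def simplexSet (n : ℕ) (c : ℝ) : Set (Fin n → ℝ) :=
  {s | Monotone s ∧ ∀ i, s i ∈ Set.Icc (0:ℝ) c}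

lemma isClosed_simplexSet (n : ℕ) (c : ℝ) : IsClosed (simplexSet n c) := by
  have h1 : IsClosed {s : Fin n → ℝ | Monotone s} := by
    have : {s : Fin n → ℝ | Monotone s} =
        ⋂ (i : Fin n) (j : Fin n) (_ : i ≤ j), {s : Fin n → ℝ | s i ≤ s j} := by
      ext s
      simp only [Set.mem_iInter, Set.mem_setOf_eq]
      exact ⟨fun h i j hij => h hij, fun h i j hij => h i j hij⟩
    rw [this]
    exact isClosed_iInter fun i => isClosed_iInter fun j => isClosed_iInter fun _ =>
      isClosed_le (continuous_apply i) (continuous_apply j)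
  have h3 : IsClosed {s : Fin n → ℝ | ∀ i, s i ∈ Set.Icc (0:ℝ) c} := by
    have : {s : Fin n → ℝ | ∀ i, s i ∈ Set.Icc (0:ℝ) c} = Set.pi Set.univ fun _ => Set.Icc 0 c := by
      ext s
      simp only [Set.mem_setOf_eq, Set.mem_univ_pi, Set.mem_Icc]
    rw [this]
    exact isClosed_set_pi fun i _ => isClosed_Icc
  exact h1.inter h3

lemma measurableSet_simplexSet (n : ℕ) (c : ℝ) : MeasurableSet (simplexSet n c) :=
  (isClosed_simplexSet n c).measurableSet

lemma isCompact_simplexSet (n : ℕ) (c : ℝ) : IsCompact (simplexSet n c) := by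
  refine (isCompact_univ_pi fun _ : Fin n => isCompact_Icc (a := (0:ℝ)) (b := c)).of_isClosed_subset
    (isClosed_simplexSet n c) ?_
  intro s hs
  simp only [Set.mem_univ_pi]
  exact fun i => hs.2 i

lemma integrableOn_simplexSet (n : ℕ) (c : ℝ) (ν : Fin n → ℕ) :
    IntegrableOn (fun s => ∏ k, s k ^ ν k) (simplexSet n c) :=
  ContinuousOn.integrableOn_compact (isCompact_simplexSet n c)
    (continuous_finset_prod _ fun k _ => (continuous_apply k).pow (ν k)).continuousOn

lemma monotone_snoc_iff {n : ℕ} (t : Fin n → ℝ) (x : ℝ) :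
    Monotone (Fin.snoc t x : Fin (n+1) → ℝ) ↔ Monotone t ∧ ∀ i, t i ≤ x := by
  constructor
  · intro h
    refine ⟨fun i j hij => ?_, fun i => ?_⟩
    · have := h (Fin.castSucc_le_castSucc_iff.mpr hij)
      simpa [Fin.snoc_castSucc] using this
    · have := h (Fin.le_last i.castSucc)
      simpa [Fin.snoc_castSucc, Fin.snoc_last] using this
  · rintro ⟨h1, h2⟩ i j hij
    rcases Fin.eq_castSucc_or_eq_last j with ⟨j', rfl⟩ | rfl
    · have hi : i ≠ Fin.last n := by
        intro h; subst h
        exact absurd (lt_of_le_of_lt hij (Fin.castSucc_lt_last j')) (lt_irrefl _)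
      rcases Fin.eq_castSucc_or_eq_last i with ⟨i', rfl⟩ | rfl
      · simpa [Fin.snoc_castSucc] using h1 (Fin.castSucc_le_castSucc_iff.mp hij)
      · exact absurd rfl hi
    · rcases Fin.eq_castSucc_or_eq_last i with ⟨i', rfl⟩ | rfl
      · simpa [Fin.snoc_castSucc, Fin.snoc_last] using h2 i'
      · simp

lemma snoc_mem_simplexSet_iff {n : ℕ} (c : ℝ) (t : Fin n → ℝ) (x : ℝ) :
    (Fin.snoc t x : Fin (n+1) → ℝ) ∈ simplexSet (n+1) c ↔
      x ∈ Set.Icc (0:ℝ) c ∧ t ∈ simplexSet n x := by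
  simp only [simplexSet, Set.mem_setOf_eq, monotone_snoc_iff]
  constructor
  · rintro ⟨⟨hmono, hle⟩, hmem⟩
    have hx := hmem (Fin.last n)
    rw [Fin.snoc_last] at hx
    refine ⟨hx, hmono, fun i => ⟨?_, hle i⟩⟩
    have := hmem i.castSucc
    rw [Fin.snoc_castSucc] at this
    exact this.1
  · rintro ⟨hx, hmono, hmem⟩
    refine ⟨⟨hmono, fun i => (hmem i).2⟩, fun i => ?_⟩
    rcases Fin.eq_castSucc_or_eq_last i with ⟨i', rfl⟩ | rfl
    · rw [Fin.snoc_castSucc]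
      exact ⟨(hmem i').1, le_trans (hmem i').2 hx.2⟩
    · rw [Fin.snoc_last]
      exact hx

lemma Iic_castSucc_eq {n : ℕ} (k : Fin n) :
    Finset.Iic (Fin.castSucc k) = (Finset.Iic k).map Fin.castSuccOrderEmb.toEmbedding := by
  ext j
  simp only [Finset.mem_Iic, Finset.mem_map, RelEmbedding.coe_toEmbedding,
    Fin.castSuccOrderEmb_apply]
  constructor
  · intro hj
    have hjn : (j : ℕ) < n := lt_of_le_of_lt (by exact_mod_cast hj) k.isLt
    exact ⟨⟨j, hjn⟩, by simpa [Fin.le_def] using hj, by simp [Fin.ext_iff]⟩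
  · rintro ⟨a, ha, rfl⟩
    exact Fin.castSucc_le_castSucc_iff.mpr ha

lemma sum_Iic_castSucc {n : ℕ} (k : Fin n) (f : Fin (n+1) → ℕ) :
    ∑ j ∈ Finset.Iic (Fin.castSucc k), f j = ∑ j ∈ Finset.Iic k, f (Fin.castSucc j) := by
  rw [Iic_castSucc_eq, Finset.sum_map]
  rfl

lemma Iic_last_eq {n : ℕ} : Finset.Iic (Fin.last n) = Finset.univ := by
  ext j; simp [Fin.le_last]

lemma aux_integral (n : ℕ) : ∀ (ν : Fin n → ℕ) (c : ℝ), 0 ≤ c →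
    ∫ s in simplexSet n c, ∏ k, s k ^ ν k
      = c ^ (∑ j, (ν j + 1)) /
        ((∏ k : Fin n, (∑ j ∈ Finset.Iic k, (ν j + 1)) : ℕ) : ℝ) := by
  induction n with
  | zero =>
    intro ν c hc
    have hS : simplexSet 0 c = Set.univ := by
      ext s
      simp only [simplexSet, Set.mem_setOf_eq, Set.mem_univ, iff_true]
      exact ⟨Subsingleton.monotone s, fun i => i.elim0⟩
    rw [hS]
    rw [MeasureTheory.setIntegral_univ]
    simp only [Finset.univ_eq_empty, Finset.prod_empty, Finset.sum_empty, pow_zero]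
    rw [MeasureTheory.integral_const, MeasureTheory.volume_pi, measureReal_def, Measure.pi_univ]
    simp
  | succ n ih =>
    intro ν c hc
    set m : ℕ := ∑ j : Fin n, (ν (Fin.castSucc j) + 1) with hm
    set D : ℕ := ∏ k : Fin n, (∑ j ∈ Finset.Iic k, (ν (Fin.castSucc j) + 1)) with hD
    have hmeas := measurableSet_simplexSet (n+1) c
    set f : (Fin (n+1) → ℝ) → ℝ := fun s => ∏ k, s k ^ ν k with hf
    set F := Set.indicator (simplexSet (n+1) c) f with hF
    set e := MeasurableEquiv.piFinSuccAbove (fun _ : Fin (n+1) => ℝ) (Fin.last n) with he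
    have hmp := (volume_preserving_piFinSuccAbove (fun _ : Fin (n+1) => ℝ) (Fin.last n)).symm e
    have hF_int : Integrable F :=
      (integrable_indicator_iff hmeas).mpr (integrableOn_simplexSet (n+1) c ν)
    rw [← integral_indicator hmeas, ← hF]
    have key : (∫ s, F s) = ∫ p : ℝ × (Fin n → ℝ), F (Fin.snoc p.2 p.1) := by
      rw [← hmp.integral_comp e.symm.measurableEmbedding F]
      congr 1 with p
      simp [he, MeasurableEquiv.piFinSuccAbove_symm_apply, Fin.insertNthEquiv,
        Fin.insertNth_last']
    have hFc_int : Integrable (fun p : ℝ × (Fin n → ℝ) => F (Fin.snoc p.2 p.1))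
        (volume.prod volume) := by
      have h2 := (hmp.integrable_comp_emb e.symm.measurableEmbedding).mpr hF_int
      rw [← Measure.volume_eq_prod]
      simpa [Function.comp_def, he, MeasurableEquiv.piFinSuccAbove_symm_apply,
        Fin.insertNthEquiv, Fin.insertNth_last'] using h2
    have key2 : (∫ p : ℝ × (Fin n → ℝ), F (Fin.snoc p.2 p.1) ∂(volume.prod volume))
        = ∫ x : ℝ, ∫ t : Fin n → ℝ, F (Fin.snoc t x) :=
      MeasureTheory.integral_prod _ hFc_int
    rw [key, show (volume : Measure (ℝ × (Fin n → ℝ))) = volume.prod volume from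
      Measure.volume_eq_prod ℝ (Fin n → ℝ), key2]
    have inner_eq : ∀ x : ℝ, (∫ t : Fin n → ℝ, F (Fin.snoc t x)) =
        Set.indicator (Set.Icc (0:ℝ) c)
          (fun x => x ^ (ν (Fin.last n) + m) * ((D:ℝ))⁻¹) x := by
      intro x
      by_cases hx : x ∈ Set.Icc (0:ℝ) c
      · rw [Set.indicator_of_mem hx]
        have hpt : ∀ t : Fin n → ℝ, F (Fin.snoc t x) =
            Set.indicator (simplexSet n x)
              (fun t => (∏ k : Fin n, t k ^ ν (Fin.castSucc k)) * x ^ ν (Fin.last n)) t := by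
          intro t
          by_cases ht : t ∈ simplexSet n x
          · rw [Set.indicator_of_mem ht, hF,
              Set.indicator_of_mem ((snoc_mem_simplexSet_iff c t x).mpr ⟨hx, ht⟩), hf]
            show (∏ k : Fin (n+1), (Fin.snoc t x : Fin (n+1) → ℝ) k ^ ν k) = _
            rw [Fin.prod_univ_castSucc]
            simp [Fin.snoc_castSucc, Fin.snoc_last]
          · rw [Set.indicator_of_notMem ht, hF, Set.indicator_of_notMem]
            intro hmem
            exact ht ((snoc_mem_simplexSet_iff c t x).mp hmem).2
        simp_rw [hpt]
        rw [integral_indicator (measurableSet_simplexSet n x), integral_mul_const,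
          ih (fun k => ν (Fin.castSucc k)) x hx.1]
        rw [← hm, ← hD, pow_add]
        ring
      · rw [Set.indicator_of_notMem hx]
        have hzero : ∀ t : Fin n → ℝ, F (Fin.snoc t x) = 0 := by
          intro t
          rw [hF, Set.indicator_of_notMem]
          intro hmem
          exact hx ((snoc_mem_simplexSet_iff c t x).mp hmem).1
        simp [hzero]
    simp_rw [inner_eq]
    rw [integral_indicator measurableSet_Icc, integral_mul_const,
      MeasureTheory.integral_Icc_eq_integral_Ioc, ← intervalIntegral.integral_of_le hc,
      integral_pow]
    have hsum : ∑ j : Fin (n+1), (ν j + 1) = ν (Fin.last n) + m + 1 := by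
      rw [Fin.sum_univ_castSucc, ← hm]
      omega
    have hprod : (∏ k : Fin (n+1), (∑ j ∈ Finset.Iic k, (ν j + 1)))
        = D * (ν (Fin.last n) + m + 1) := by
      rw [Fin.prod_univ_castSucc]
      congr 1
      · rw [hD]
        exact Finset.prod_congr rfl fun k _ => sum_Iic_castSucc k _
      · rw [Iic_last_eq, ← hsum]
    have hDpos : 0 < D := Finset.prod_pos fun k _ =>
      Finset.sum_pos (fun j _ => Nat.succ_pos _) ⟨k, Finset.mem_Iic.mpr le_rfl⟩
    have hD0 : (D:ℝ) ≠ 0 := Nat.cast_ne_zero.mpr hDpos.ne'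
    rw [hsum, hprod]
    have h10 : ((ν (Fin.last n) + m : ℕ) : ℝ) + 1 ≠ 0 := Nat.cast_add_one_ne_zero _
    rw [zero_pow (by omega : ν (Fin.last n) + m + 1 ≠ 0), sub_zero, Nat.cast_mul,
      div_eq_mul_inv, div_eq_mul_inv, mul_assoc, ← mul_inv,
      mul_comm ((↑(ν (Fin.last n) + m) : ℝ) + 1) (D:ℝ)]
    norm_cast

theorem integral_monomial_ordered_simplex (n : ℕ) (hn : 1 ≤ n) (ν : Fin n → ℕ) :
    ∫ s in {s : Fin n → ℝ | Monotone s ∧ ∀ i, s i ∈ Set.Icc (0 : ℝ) 1},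
        ∏ k, s k ^ ν k =
      ((∏ k : Fin n, (∑ j ∈ Finset.Iic k, (ν j + 1)) : ℕ) : ℝ)⁻¹ := by
  have := aux_integral n ν 1 zero_le_one
  rw [show {s : Fin n → ℝ | Monotone s ∧ ∀ i, s i ∈ Set.Icc (0 : ℝ) 1} = simplexSet n 1 from rfl,
    this, one_pow, one_div]
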